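/- Let F be a Borel-amenable set of reductions, ⟨D_n : n ∈ ω⟩ a partition of ℝ into sets of Δ_F, and A ⊆ ℝ with A ≠ ℝ. If C ⊆ ℝ satisfies A ∩ D_n ≤_F C for every n ∈ ω, then A ≤_F C. -/

import Mathlib

open scoped Classical

/-- The standard metric on Baire space: `d x y = (1/2)^m` where `m` is least
with `x m ≠ y m`, and `0` if `x = y`. -/
noncomputable def bd (x y : ℕ → ℕ) : ℝ :=
  if h : x = y then 0 else (1 / 2 : ℝ) ^ (Nat.find (Function.ne_iff.mp h))

/-- `f` is Lipschitz with constant `C` with respect to `bd`. -/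
def LipWith (C : ℝ) (f : (ℕ → ℕ) → ℕ → ℕ) : Prop :=
  ∀ x y, bd (f x) (f y) ≤ C * bd x y

/-- The set of all Lipschitz functions (of any constant `2^k`, `k ∈ ℤ`). -/
def Lip : Set ((ℕ → ℕ) → ℕ → ℕ) := {f | ∃ k : ℤ, LipWith ((2 : ℝ) ^ k) f}

/-- `A` is `F`-reducible to `B`. -/
def Red (F : Set ((ℕ → ℕ) → (ℕ → ℕ))) (A B : Set (ℕ → ℕ)) : Prop :=
  ∃ f ∈ F, A = f ⁻¹' B

/-- The basic clopen set `N_⟨0⟩`. -/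
def N0 : Set (ℕ → ℕ) := {x | x 0 = 0}

/-- The characteristic set of `F`. -/
def Delta (F : Set ((ℕ → ℕ) → (ℕ → ℕ))) : Set (Set (ℕ → ℕ)) :=
  {A | Red F A N0}

/-- `F` is a Borel-amenable set of reductions: a set of Borel functions on Baire
space, closed under composition, containing all Lipschitz functions, and closed
under piecewise combinations along `Δ_F`-partitions. -/
def BorelAmenable (F : Set ((ℕ → ℕ) → (ℕ → ℕ))) : Prop :=
  (∀ f ∈ F, ∀ g ∈ F, f ∘ g ∈ F) ∧
  (∀ f ∈ F, Measurable f) ∧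
  Lip ⊆ F ∧
  (∀ (D : ℕ → Set (ℕ → ℕ)) (fs : ℕ → (ℕ → ℕ) → ℕ → ℕ) (g : (ℕ → ℕ) → ℕ → ℕ),
    (∀ n, D n ∈ Delta F) → Pairwise (Function.onFun Disjoint D) → (⋃ n, D n) = Set.univ →
    (∀ n, fs n ∈ F) → (∀ n, ∀ x ∈ D n, g x = fs n x) → g ∈ F)

theorem stmt10 (F : Set ((ℕ → ℕ) → (ℕ → ℕ))) (hF : BorelAmenable F)
    (D : ℕ → Set (ℕ → ℕ)) (hD : ∀ n, D n ∈ Delta F)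
    (hdisj : Pairwise (Function.onFun Disjoint D)) (hcover : (⋃ n, D n) = Set.univ)
    (A C : Set (ℕ → ℕ)) (hA : A ≠ Set.univ)
    (h : ∀ n, Red F (A ∩ D n) C) :
    Red F A C := by
  choose fs hfsF hfs using h
  have hex : ∀ x : ℕ → ℕ, ∃ n, x ∈ D n := by
    intro x
    have : x ∈ ⋃ n, D n := hcover ▸ Set.mem_univ x
    exact Set.mem_iUnion.mp this
  set idx : (ℕ → ℕ) → ℕ := fun x => Classical.choose (hex x) with hidx
  have hidx_mem : ∀ x, x ∈ D (idx x) := fun x => Classical.choose_spec (hex x)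
  have hidx_eq : ∀ n, ∀ x ∈ D n, idx x = n := by
    intro n x hx
    by_contra hne
    exact (hdisj hne).le_bot ⟨hidx_mem x, hx⟩
  set g : (ℕ → ℕ) → ℕ → ℕ := fun x => fs (idx x) x with hg
  have hgF : g ∈ F := by
    refine hF.2.2.2 D fs g hD hdisj hcover hfsF ?_
    intro n x hx
    simp only [hg, hidx_eq n x hx]
  refine ⟨g, hgF, ?_⟩
  ext x
  constructor
  · intro hxA
    have : x ∈ A ∩ D (idx x) := ⟨hxA, hidx_mem x⟩
    rw [hfs (idx x)] at this
    exact this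
  · intro hxC
    have : x ∈ (fs (idx x)) ⁻¹' C := hxC
    rw [← hfs (idx x)] at this
    exact this.1
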